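/- Let Ω and Δ be locally compact Hausdorff spaces and θ : C₀(Ω) → C₀(Δ) a bijective ℂ-linear map (not assumed bounded) such that both θ and θ⁻¹ are disjointness preserving (f·g = 0 implies θ(f)·θ(g) = 0, and similarly for θ⁻¹). Then there exist a homeomorphism σ : Δ → Ω and a nowhere-vanishing continuous function h : Δ → ℂ such that θ(f)(ν) = h(ν)·f(σ(ν)) for all f ∈ C₀(Ω) and ν ∈ Δ. -/

import Mathlib

open Set Filter Topology OnePoint ZeroAtInfty
set_option linter.unusedSectionVars false
set_option linter.unusedVariables false
set_option maxHeartbeats 1000000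

namespace S10
variable {X : Type*} [TopologicalSpace X] [LocallyCompactSpace X] [T2Space X]

noncomputable def ext (f : C₀(X, ℂ)) : C(OnePoint X, ℂ) :=
  OnePoint.continuousMapMk f.toContinuousMap 0 (by
    rw [coclosedCompact_eq_cocompact]; exact zero_at_infty f)

@[simp] lemma ext_coe (f : C₀(X, ℂ)) (x : X) : ext f (x : OnePoint X) = f x := rfl
@[simp] lemma ext_infty (f : C₀(X, ℂ)) : ext f ∞ = 0 := rfl

def Supported (f : C₀(X, ℂ)) (U : Set (OnePoint X)) : Prop :=
  ∀ z, ext f z ≠ 0 → z ∈ U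

lemma supported_iff {f : C₀(X, ℂ)} {U : Set (OnePoint X)} :
    Supported f U ↔ ∀ x : X, f x ≠ 0 → (x : OnePoint X) ∈ U := by
  constructor
  · intro h x hx; exact h _ (by simpa using hx)
  · intro h z hz
    induction z using OnePoint.rec with
    | infty => simp at hz
    | coe x => exact h x (by simpa using hz)

lemma Supported.mono {f : C₀(X, ℂ)} {U V : Set (OnePoint X)} (h : Supported f U) (hUV : U ⊆ V) :
    Supported f V := fun z hz => hUV (h z hz)

noncomputable def evalLM {Y : Type*} [TopologicalSpace Y] (y : Y) : C₀(Y, ℂ) →ₗ[ℂ] ℂ where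
  toFun f := f y
  map_add' f g := rfl
  map_smul' c f := rfl

@[simp] lemma evalLM_apply {Y : Type*} [TopologicalSpace Y] (y : Y) (f : C₀(Y, ℂ)) :
    evalLM y f = f y := rfl

lemma sum_apply {Y : Type*} [TopologicalSpace Y] {ι : Type*} (s : Finset ι)
    (g : ι → C₀(Y, ℂ)) (y : Y) : (∑ z ∈ s, g z) y = ∑ z ∈ s, g z y :=
  map_sum (evalLM y) g s

lemma norm_apply_le' {Y : Type*} [TopologicalSpace Y] (f : C₀(Y, ℂ)) (y : Y) : ‖f y‖ ≤ ‖f‖ := by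
  rw [← ZeroAtInftyContinuousMap.norm_toBCF_eq_norm]
  exact BoundedContinuousFunction.norm_coe_le_norm f.toBCF y

lemma norm_apply_le (f : C₀(X, ℂ)) (x : X) : ‖f x‖ ≤ ‖f‖ := norm_apply_le' f x

lemma norm_le_of_forall {f : C₀(X, ℂ)} {C : ℝ} (hC : 0 ≤ C) (h : ∀ x, ‖f x‖ ≤ C) : ‖f‖ ≤ C := by
  rw [← ZeroAtInftyContinuousMap.norm_toBCF_eq_norm]
  exact (BoundedContinuousFunction.norm_le hC).mpr h

lemma mul_eq_zero_of_disjoint {f g : C₀(X, ℂ)} {U V : Set (OnePoint X)}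
    (hf : Supported f U) (hg : Supported g V) (h : U ∩ V = ∅) : f * g = 0 := by
  ext x
  simp only [ZeroAtInftyContinuousMap.mul_apply, ZeroAtInftyContinuousMap.zero_apply]
  by_contra hx
  rcases mul_ne_zero_iff.mp hx with ⟨h1, h2⟩
  have m1 := supported_iff.mp hf x h1
  have m2 := supported_iff.mp hg x h2
  rw [eq_empty_iff_forall_notMem] at h
  exact h _ ⟨m1, m2⟩

/-- Partition of unity decomposition. -/
lemma exists_decomp (V : OnePoint X → Set (OnePoint X)) (hVo : ∀ z, IsOpen (V z))
    (hVz : ∀ z, z ∈ V z) (f : C₀(X, ℂ)) :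
    ∃ (s : Finset (OnePoint X)) (g : OnePoint X → C₀(X, ℂ)),
      (∀ z, Supported (g z) (V z)) ∧ (∀ z, ∀ x : X, g z x ≠ 0 → f x ≠ 0) ∧
      f = ∑ z ∈ s, g z := by
  obtain ⟨p, hp⟩ := PartitionOfUnity.exists_isSubordinate (s := (univ : Set (OnePoint X)))
    isClosed_univ V hVo (by intro z _; exact mem_iUnion.mpr ⟨z, hVz z⟩)
  have hfin : {z : OnePoint X | (Function.support (p z)).Nonempty}.Finite :=
    p.locallyFinite.finite_nonempty_of_compact
  classical
  refine ⟨hfin.toFinset, fun z => ⟨⟨fun x => (p z (x : OnePoint X) : ℂ) * f x, ?_⟩, ?_⟩, ?_, ?_, ?_⟩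
  · have h1 : Continuous fun x : X => p z (x : OnePoint X) :=
      (map_continuous (p z)).comp OnePoint.continuous_coe
    continuity
  · have h0 : Tendsto (fun x : X => ‖f x‖ * 1) (cocompact X) (𝓝 0) := by
      simpa using ((zero_at_infty f).norm.mul_const 1)
    rw [tendsto_zero_iff_norm_tendsto_zero]
    refine squeeze_zero (fun x => norm_nonneg _) (fun x => ?_) h0
    rw [norm_mul]
    have h1 : ‖((p z (x : OnePoint X) : ℝ) : ℂ)‖ ≤ 1 := by
      rw [Complex.norm_real, Real.norm_eq_abs, abs_of_nonneg (p.nonneg z _)]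
      exact p.le_one z _
    have h2 : (0:ℝ) ≤ ‖f x‖ := norm_nonneg _
    nlinarith [norm_nonneg ((p z ((x : OnePoint X)) : ℂ))]
  · intro z
    rw [supported_iff]
    intro x hx
    have : p z (x : OnePoint X) ≠ 0 := by
      intro h; apply hx; simp only [ZeroAtInftyContinuousMap.coe_mk]; simp [h]
    exact hp z (subset_closure this)
  · intro z x hx
    intro h; apply hx; simp only [ZeroAtInftyContinuousMap.coe_mk]; simp [h]
  · ext x
    have hsum : ∑ᶠ z, p z (x : OnePoint X) = 1 := p.sum_eq_one (mem_univ _)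
    have hsub : Function.support (fun z => p z (x : OnePoint X)) ⊆ ↑hfin.toFinset := by
      intro z hz
      simp only [Set.Finite.coe_toFinset, mem_setOf_eq]
      exact ⟨_, hz⟩
    rw [finsum_eq_sum_of_support_subset _ hsub] at hsum
    rw [sum_apply]
    simp only [ZeroAtInftyContinuousMap.coe_mk]
    rw [← Finset.sum_mul]
    rw_mod_cast [hsum]
    simp

def Sep (φ : C₀(X, ℂ) →ₗ[ℂ] ℂ) : Prop := ∀ f g, f * g = 0 → φ f = 0 ∨ φ g = 0

def IsSupportPt (φ : C₀(X, ℂ) →ₗ[ℂ] ℂ) (z : OnePoint X) : Prop :=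
  ∀ U, IsOpen U → z ∈ U → ∃ f, Supported f U ∧ φ f ≠ 0

lemma exists_supportPt {φ : C₀(X, ℂ) →ₗ[ℂ] ℂ} (hφ : φ ≠ 0) : ∃ z, IsSupportPt φ z := by
  by_contra h
  push_neg at h
  simp only [IsSupportPt, not_forall] at h
  have h' : ∀ z : OnePoint X, ∃ U, IsOpen U ∧ z ∈ U ∧ ∀ f, Supported f U → φ f = 0 := by
    intro z
    obtain ⟨U, hU, hzU, hf⟩ := h z
    push_neg at hf
    exact ⟨U, hU, hzU, hf⟩
  choose V hVo hVz hV using h'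
  apply hφ
  ext f
  obtain ⟨s, g, hsup, _, hdec⟩ := exists_decomp V hVo hVz f
  rw [hdec, map_sum]
  simp only [LinearMap.zero_apply]
  exact Finset.sum_eq_zero fun z _ => hV z (g z) (hsup z)

lemma supportPt_unique {φ : C₀(X, ℂ) →ₗ[ℂ] ℂ} (hsep : Sep φ) {z w : OnePoint X}
    (hz : IsSupportPt φ z) (hw : IsSupportPt φ w) : z = w := by
  by_contra hne
  obtain ⟨U, V, hU, hV, hzU, hwV, hUV⟩ := t2_separation hne
  obtain ⟨f, hfs, hfφ⟩ := hz U hU hzU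
  obtain ⟨g, hgs, hgφ⟩ := hw V hV hwV
  rcases hsep f g (mul_eq_zero_of_disjoint hfs hgs (disjoint_iff_inter_eq_empty.mp hUV)) with h | h
  exacts [hfφ h, hgφ h]

/-- the key vanishing lemma: if `f` vanishes on a neighborhood of the unique support point,
then `φ f = 0`. -/
lemma vanish {φ : C₀(X, ℂ) →ₗ[ℂ] ℂ} {z : OnePoint X}
    (hu : ∀ w, w ≠ z → ¬IsSupportPt φ w) {U : Set (OnePoint X)} (hU : IsOpen U) (hzU : z ∈ U)
    {f : C₀(X, ℂ)} (hf : ∀ w ∈ U, ext f w = 0) : φ f = 0 := by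
  classical
  have h' : ∀ w : OnePoint X, w ≠ z → ∃ W, IsOpen W ∧ w ∈ W ∧ ∀ f, Supported f W → φ f = 0 := by
    intro w hw
    have := hu w hw
    simp only [IsSupportPt, not_forall] at this
    obtain ⟨W, hWo, hwW, hfW⟩ := this
    push_neg at hfW
    exact ⟨W, hWo, hwW, hfW⟩
  set V : OnePoint X → Set (OnePoint X) := fun w => if h : w = z then U else (h' w h).choose
    with hVdef
  have hVo : ∀ w, IsOpen (V w) := by
    intro w
    by_cases h : w = z
    · simp [hVdef, h, hU]
    · simp only [hVdef, dif_neg h]; exact (h' w h).choose_spec.1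
  have hVz : ∀ w, w ∈ V w := by
    intro w
    by_cases h : w = z
    · simp [hVdef, h, dif_pos, hzU]
    · simp only [hVdef, dif_neg h]; exact (h' w h).choose_spec.2.1
  obtain ⟨s, g, hsup, hng, hdec⟩ := exists_decomp V hVo hVz f
  rw [hdec, map_sum]
  refine Finset.sum_eq_zero fun w _ => ?_
  by_cases h : w = z
  · subst h
    have : g w = 0 := by
      ext x
      by_contra hne
      have h1 : f x ≠ 0 := hng w x hne
      have h2 : (x : OnePoint X) ∈ V w := hsup w _ (by simpa using hne)
      rw [hVdef] at h2
      simp only [dif_pos rfl] at h2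
      have := hf _ h2
      simp only [ext_coe] at this
      exact h1 this
    rw [this, map_zero]
  · have hb := (h' w h).choose_spec.2.2
    have : V w = (h' w h).choose := by simp [hVdef, dif_neg h]
    exact hb (g w) (this ▸ hsup w)

/-- A bump function on the compactification: 1 on a neighborhood `W` of `z`, vanishing off `U`. -/
lemma exists_bump {U : Set (OnePoint X)} (hU : IsOpen U) {z : OnePoint X} (hz : z ∈ U) :
    ∃ (p : C(OnePoint X, ℝ)) (W : Set (OnePoint X)), IsOpen W ∧ z ∈ W ∧
      (∀ a ∈ W, p a = 1) ∧ (∀ a, a ∉ U → p a = 0) ∧ ∀ a, p a ∈ Icc (0:ℝ) 1 := by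
  obtain ⟨W, hWo, hzW, hclW⟩ :=
    normal_exists_closure_subset (isClosed_singleton (x := z)) hU (singleton_subset_iff.mpr hz)
  obtain ⟨q, hq0, hq1, hq01⟩ := exists_continuous_zero_one_of_isClosed
    (isClosed_compl_iff.mpr hU) isClosed_closure
    (by rw [disjoint_compl_left_iff_subset]; exact hclW)
  exact ⟨q, W, hWo, hzW rfl, fun a ha => hq1 (subset_closure ha), fun a ha => hq0 ha, hq01⟩

/-- Urysohn: a C₀ function equal to 1 on a neighborhood of x, supported in U. -/
lemma exists_urysohn {U : Set (OnePoint X)} (hU : IsOpen U) (hinf : ∞ ∉ U) {x : X}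
    (hx : (x : OnePoint X) ∈ U) :
    ∃ (f : C₀(X, ℂ)) (W : Set (OnePoint X)), IsOpen W ∧ (x : OnePoint X) ∈ W ∧ Supported f U ∧
      (∀ a : X, (a : OnePoint X) ∈ W → f a = 1) ∧ ‖f‖ ≤ 1 ∧ f x = 1 := by
  obtain ⟨p, W, hWo, hxW, hp1, hp0, hp01⟩ := exists_bump hU hx
  have hcont : Continuous fun a : X => ((p (a : OnePoint X) : ℝ) : ℂ) := by
    have h1 : Continuous fun a : X => p (a : OnePoint X) :=
      (map_continuous p).comp OnePoint.continuous_coe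
    continuity
  have hzero : Tendsto (fun a : X => ((p (a : OnePoint X) : ℝ) : ℂ)) (cocompact X) (𝓝 0) := by
    have h1 : Tendsto (fun a : X => (a : OnePoint X)) (cocompact X) (𝓝 ∞) := by
      rw [← coclosedCompact_eq_cocompact]
      exact tendsto_coe_infty
    have h2 : Tendsto (fun w : OnePoint X => ((p w : ℝ) : ℂ)) (𝓝 ∞) (𝓝 0) := by
      have := ((map_continuous p).tendsto ∞)
      rw [hp0 ∞ hinf] at this
      have := (Complex.continuous_ofReal.tendsto 0).comp this
      simpa [Function.comp_def] using this
    exact h2.comp h1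
  refine ⟨⟨⟨fun a => ((p (a : OnePoint X) : ℝ) : ℂ), hcont⟩, hzero⟩, W, hWo, hxW, ?_, ?_, ?_, ?_⟩
  · rw [supported_iff]
    intro a ha
    by_contra hne
    apply ha
    simp only [ZeroAtInftyContinuousMap.coe_mk, ContinuousMap.coe_mk]
    rw [hp0 _ hne]; simp
  · intro a ha
    simp only [ZeroAtInftyContinuousMap.coe_mk, ContinuousMap.coe_mk]
    rw [hp1 _ ha]; simp
  · refine norm_le_of_forall zero_le_one fun a => ?_
    simp only [ZeroAtInftyContinuousMap.coe_mk, ContinuousMap.coe_mk, Complex.norm_real,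
      Real.norm_eq_abs]
    rw [abs_of_nonneg (hp01 _).1]
    exact (hp01 _).2
  · simp only [ZeroAtInftyContinuousMap.coe_mk, ContinuousMap.coe_mk]
    rw [hp1 _ hxW]; simp

/-- Bounded functional with unique support point kills functions vanishing at the support. -/
lemma bounded_vanish {φ : C₀(X, ℂ) →ₗ[ℂ] ℂ} {z : OnePoint X}
    (hu : ∀ w, w ≠ z → ¬IsSupportPt φ w) {C : ℝ} (hC : 0 ≤ C) (hb : ∀ f, ‖φ f‖ ≤ C * ‖f‖)
    {f : C₀(X, ℂ)} (hf : ext f z = 0) : φ f = 0 := by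
  have key : ∀ ε : ℝ, 0 < ε → ‖φ f‖ ≤ C * ε := by
    intro ε hε
    have hd : ∀ x : X, (0:ℝ) < max ‖f x‖ ε := fun x => lt_of_lt_of_le hε (le_max_right _ _)
    have hd' : ∀ x : X, ((max ‖f x‖ ε : ℝ) : ℂ) ≠ 0 := fun x => by
      simp only [ne_eq, Complex.ofReal_eq_zero]
      exact (hd x).ne'
    have hnorm : ∀ x : X, ‖(ε : ℂ) * f x / ((max ‖f x‖ ε : ℝ) : ℂ)‖
        = ε * ‖f x‖ / max ‖f x‖ ε := by
      intro x
      rw [norm_div, norm_mul]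
      simp only [Complex.norm_real, Real.norm_eq_abs]
      rw [abs_of_pos hε, abs_of_pos (hd x)]
    have hb1 : ∀ x : X, ε * ‖f x‖ / max ‖f x‖ ε ≤ ‖f x‖ := by
      intro x
      rw [div_le_iff₀ (hd x)]
      nlinarith [le_max_right ‖f x‖ ε, norm_nonneg (f x)]
    have hb2 : ∀ x : X, ε * ‖f x‖ / max ‖f x‖ ε ≤ ε := by
      intro x
      rw [div_le_iff₀ (hd x)]
      nlinarith [le_max_left ‖f x‖ ε, norm_nonneg (f x)]
    set e : C₀(X, ℂ) := ⟨⟨fun x => (ε : ℂ) * f x / ((max ‖f x‖ ε : ℝ) : ℂ), by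
      exact Continuous.div (by continuity)
        (Complex.continuous_ofReal.comp (by continuity)) hd'⟩, by
      rw [tendsto_zero_iff_norm_tendsto_zero]
      have h0 : Tendsto (fun x : X => ‖f x‖) (cocompact X) (𝓝 0) := by
        simpa using (zero_at_infty f).norm
      refine squeeze_zero (fun x => norm_nonneg _) (fun x => ?_) h0
      simp only [ContinuousMap.coe_mk]
      rw [hnorm x]
      exact hb1 x⟩ with he
    have hex : ∀ x : X, e x = (ε : ℂ) * f x / ((max ‖f x‖ ε : ℝ) : ℂ) := fun x => rfl
    have hmz : φ (f - e) = 0 := by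
      refine vanish hu (U := {w | ‖ext f w‖ < ε}) ?_ ?_ ?_
      · exact isOpen_lt (by continuity) continuous_const
      · show ‖ext f z‖ < ε
        rw [hf]; simpa using hε
      · intro w hw
        simp only [mem_setOf_eq] at hw
        induction w using OnePoint.rec with
        | infty => simp
        | coe x =>
          simp only [ext_coe] at hw ⊢
          have hm : max ‖f x‖ ε = ε := max_eq_right hw.le
          show f x - e x = 0
          rw [hex, hm]
          have : ((ε:ℝ):ℂ) ≠ 0 := by
            simp only [ne_eq, Complex.ofReal_eq_zero]; exact hε.ne'
          field_simp
          simp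
    have hφf : φ f = φ e := by
      have h := map_sub φ f e
      rw [hmz] at h
      exact sub_eq_zero.mp h.symm
    have hee : ‖e‖ ≤ ε := by
      refine norm_le_of_forall hε.le fun x => ?_
      rw [hex, hnorm x]
      exact hb2 x
    rw [hφf]
    calc ‖φ e‖ ≤ C * ‖e‖ := hb e
      _ ≤ C * ε := mul_le_mul_of_nonneg_left hee hC
  have h0 : ‖φ f‖ ≤ 0 := by
    refine le_of_forall_pos_le_add fun ε hε => ?_
    have hC1 : (0:ℝ) < C + 1 := by linarith
    have hk := key (ε / (C+1)) (by positivity)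
    have h2 : C * (ε / (C+1)) ≤ ε := by
      rw [mul_div_assoc']
      rw [div_le_iff₀ hC1]
      nlinarith
    linarith
  simpa using le_antisymm h0 (norm_nonneg _)

noncomputable def smulExt (p : C(OnePoint X, ℝ)) (f : C₀(X, ℂ)) : C₀(X, ℂ) where
  toFun := fun x => (p (x : OnePoint X) : ℂ) * f x
  continuous_toFun := by
    have h1 : Continuous fun x : X => p (x : OnePoint X) :=
      (map_continuous p).comp OnePoint.continuous_coe
    continuity
  zero_at_infty' := by
    obtain ⟨C, hC⟩ : ∃ C, ∀ z, ‖((p z : ℝ) : ℂ)‖ ≤ C := by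
      obtain ⟨C, hC⟩ := (isCompact_range (map_continuous p)).isBounded.exists_norm_le
      exact ⟨C, fun z => by simpa using hC _ (mem_range_self z)⟩
    have h0 : Tendsto (fun x : X => C * ‖f x‖) (cocompact X) (𝓝 0) := by
      simpa using ((zero_at_infty f).norm.const_mul C)
    rw [tendsto_zero_iff_norm_tendsto_zero]
    refine squeeze_zero (fun x => norm_nonneg _) (fun x => ?_) h0
    rw [norm_mul]
    exact mul_le_mul_of_nonneg_right (hC _) (norm_nonneg _)

@[simp] lemma smulExt_apply (p : C(OnePoint X, ℝ)) (f : C₀(X, ℂ)) (x : X) :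
    smulExt p f x = (p (x : OnePoint X) : ℂ) * f x := rfl

/-- An unbounded functional with support point `z` is unboundedly large on functions supported
in any given neighborhood of `z`. -/
lemma unbounded_loc {φ : C₀(X, ℂ) →ₗ[ℂ] ℂ} {z : OnePoint X}
    (hu : ∀ w, w ≠ z → ¬IsSupportPt φ w)
    (hunb : ¬∃ C : ℝ, ∀ f, ‖φ f‖ ≤ C * ‖f‖) {O : Set (OnePoint X)} (hO : IsOpen O)
    (hzO : z ∈ O) (M : ℝ) : ∃ f, Supported f O ∧ ‖f‖ ≤ 1 ∧ M < ‖φ f‖ := by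
  push_neg at hunb
  obtain ⟨f₀, hf₀⟩ := hunb (max M 0)
  have hf₀ne : f₀ ≠ 0 := by
    intro h
    rw [h] at hf₀
    simp only [map_zero, norm_zero] at hf₀
    have : (0:ℝ) ≤ max M 0 * 0 := by simp
    linarith
  have hn0 : (0:ℝ) < ‖f₀‖ := norm_pos_iff.mpr hf₀ne
  set f₁ : C₀(X, ℂ) := ((‖f₀‖ : ℂ))⁻¹ • f₀ with hf₁
  have hscal : ‖((‖f₀‖ : ℂ))⁻¹‖ = ‖f₀‖⁻¹ := by
    rw [norm_inv]
    simp
  have hf₁norm : ‖f₁‖ = 1 := by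
    rw [hf₁, norm_smul ((‖f₀‖ : ℂ))⁻¹ f₀, hscal]
    field_simp
  have hφf₁ : max M 0 < ‖φ f₁‖ := by
    rw [hf₁, _root_.map_smul, norm_smul ((‖f₀‖ : ℂ))⁻¹ (φ f₀), hscal]
    rw [inv_mul_eq_div, lt_div_iff₀ hn0]
    linarith
  obtain ⟨p, W, hWo, hzW, hp1, hp0, hp01⟩ := exists_bump hO hzO
  refine ⟨smulExt p f₁, ?_, ?_, ?_⟩
  · rw [supported_iff]
    intro x hx
    by_contra hmem
    apply hx
    simp only [smulExt_apply]
    rw [hp0 _ hmem]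
    simp
  · refine norm_le_of_forall zero_le_one fun x => ?_
    simp only [smulExt_apply, norm_mul, Complex.norm_real, Real.norm_eq_abs]
    rw [abs_of_nonneg (hp01 _).1]
    calc p (x : OnePoint X) * ‖f₁ x‖ ≤ 1 * ‖f₁ x‖ :=
          mul_le_mul_of_nonneg_right (hp01 _).2 (norm_nonneg _)
      _ = ‖f₁ x‖ := one_mul _
      _ ≤ ‖f₁‖ := norm_apply_le _ _
      _ = 1 := hf₁norm
  · have hsame : φ (smulExt p f₁) = φ f₁ := by
      have hvan : φ (f₁ - smulExt p f₁) = 0 := by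
        refine vanish hu hWo hzW ?_
        intro w hw
        induction w using OnePoint.rec with
        | infty => simp
        | coe x =>
          show f₁ x - smulExt p f₁ x = 0
          rw [smulExt_apply, hp1 _ hw]
          simp
      have h := map_sub φ f₁ (smulExt p f₁)
      rw [hvan] at h
      exact (sub_eq_zero.mp h.symm).symm
    rw [hsame]
    exact lt_of_le_of_lt (le_max_left M 0) hφf₁

noncomputable def evalCLM {Y : Type*} [TopologicalSpace Y] (y : Y) : C₀(Y, ℂ) →L[ℂ] ℂ :=
  LinearMap.mkContinuous (evalLM y) 1 (fun f => by
    simpa using norm_apply_le' f y)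

@[simp] lemma evalCLM_apply {Y : Type*} [TopologicalSpace Y] (y : Y) (f : C₀(Y, ℂ)) :
    evalCLM y f = f y := rfl

/-- The gliding hump argument. -/
lemma hump {Y : Type*} [TopologicalSpace Y] [LocallyCompactSpace Y] [T2Space Y]
    (T : C₀(X, ℂ) →ₗ[ℂ] C₀(Y, ℂ)) (z : OnePoint X)
    (H : ∀ W, IsOpen W → z ∈ W → ∀ M : ℝ, ∃ (x : OnePoint X) (y : Y),
      x ∈ W ∧ x ≠ z ∧ (∀ w, w ≠ x → ¬IsSupportPt (evalLM y ∘ₗ T) w) ∧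
      ∀ O, IsOpen O → x ∈ O → ∃ f, Supported f O ∧ ‖f‖ ≤ 1 ∧ M < ‖T f y‖) :
    False := by
  classical
  -- one step of the recursion
  have step : ∀ (p : {W : Set (OnePoint X) // IsOpen W ∧ z ∈ W}) (n : ℕ),
      ∃ d : Set (OnePoint X) × OnePoint X × Y,
        IsOpen d.1 ∧ d.2.1 ∈ d.1 ∧ closure d.1 ⊆ p.1 ∧ z ∉ closure d.1 ∧
        (∀ w, w ≠ d.2.1 → ¬IsSupportPt (evalLM d.2.2 ∘ₗ T) w) ∧
        (∀ O, IsOpen O → d.2.1 ∈ O → ∃ f, Supported f O ∧ ‖f‖ ≤ 1 ∧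
          ((n : ℝ) * 2 ^ n) < ‖T f d.2.2‖) := by
    rintro ⟨W, hWo, hzW⟩ n
    obtain ⟨x, y, hxW, hxz, huniq, hloc⟩ := H W hWo hzW ((n : ℝ) * 2 ^ n)
    obtain ⟨U, hUo, hxU, hclU⟩ := normal_exists_closure_subset
      (isClosed_singleton (x := x)) (hWo.sdiff isClosed_singleton)
      (singleton_subset_iff.mpr ⟨hxW, hxz⟩)
    refine ⟨(U, x, y), hUo, hxU rfl, fun w hw => (hclU hw).1, fun hc => (hclU hc).2 rfl,
      huniq, hloc⟩
  choose d hdo hdx hdcl hdz hduniq hdloc using step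
  -- the recursive sequence of shrinking neighborhoods of z
  let F : {W : Set (OnePoint X) // IsOpen W ∧ z ∈ W} → ℕ →
      {W : Set (OnePoint X) // IsOpen W ∧ z ∈ W} := fun p n =>
    ⟨p.1 \ closure (d p n).1, p.2.1.sdiff isClosed_closure, p.2.2, hdz p n⟩
  let Wseq : ℕ → {W : Set (OnePoint X) // IsOpen W ∧ z ∈ W} := fun n =>
    Nat.rec ⟨univ, isOpen_univ, mem_univ z⟩ (fun m ih => F ih m) n
  have hWsucc : ∀ n, Wseq (n + 1) = F (Wseq n) n := fun n => rfl
  set Useq : ℕ → Set (OnePoint X) := fun n => (d (Wseq n) n).1 with hUseq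
  set xseq : ℕ → OnePoint X := fun n => (d (Wseq n) n).2.1 with hxseq
  set yseq : ℕ → Y := fun n => (d (Wseq n) n).2.2 with hyseq
  have hUW : ∀ n, closure (Useq n) ⊆ (Wseq n).1 := fun n => hdcl _ _
  have hWmono : ∀ m n, m ≤ n → (Wseq n).1 ⊆ (Wseq m).1 := by
    intro m n hmn
    induction n, hmn using Nat.le_induction with
    | base => exact subset_rfl
    | succ n hmn ih =>
      refine subset_trans ?_ ih
      rw [hWsucc]
      exact diff_subset
  have hdisj : ∀ m n, m < n → Useq n ∩ closure (Useq m) = ∅ := by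
    intro m n hmn
    rw [eq_empty_iff_forall_notMem]
    rintro w ⟨hw1, hw2⟩
    have h1 : w ∈ (Wseq n).1 := hUW n (subset_closure hw1)
    have h2 : w ∈ (Wseq (m+1)).1 := hWmono (m+1) n hmn h1
    rw [hWsucc] at h2
    exact h2.2 hw2
  set Oseq : ℕ → Set (OnePoint X) := fun n =>
    Useq n \ ⋃ m ∈ Finset.range n, closure (Useq m) with hOseq
  have hOopen : ∀ n, IsOpen (Oseq n) := by
    intro n
    apply (hdo _ _).sdiff
    apply isClosed_biUnion_finset
    intro m _
    exact isClosed_closure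
  have hxO : ∀ n, xseq n ∈ Oseq n := by
    intro n
    refine ⟨hdx _ _, ?_⟩
    intro hmem
    rw [mem_iUnion] at hmem
    obtain ⟨m, hm⟩ := hmem
    rw [mem_iUnion] at hm
    obtain ⟨hmn, hm⟩ := hm
    rw [Finset.mem_range] at hmn
    have := hdisj m n hmn
    rw [eq_empty_iff_forall_notMem] at this
    exact this (xseq n) ⟨hdx _ _, hm⟩
  have hOdisj : ∀ m n, m ≠ n → Oseq m ∩ Oseq n = ∅ := by
    have key : ∀ m n, m < n → Oseq m ∩ Oseq n = ∅ := by
      intro m n hmn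
      rw [eq_empty_iff_forall_notMem]
      rintro w ⟨hw1, hw2⟩
      refine hw2.2 ?_
      rw [mem_iUnion]
      exact ⟨m, by rw [mem_iUnion]; exact ⟨Finset.mem_range.mpr hmn, subset_closure hw1.1⟩⟩
    intro m n hmn
    rcases lt_or_gt_of_ne hmn with h | h
    · exact key m n h
    · rw [inter_comm]; exact key n m h
  choose fseq hfsup hfnorm hfbig using fun n => hdloc (Wseq n) n (Oseq n) (hOopen n) (hxO n)
  set g : ℕ → C₀(X, ℂ) := fun n => ((1/2 : ℂ) ^ n) • fseq n with hg
  have hgnorm : ∀ n, ‖g n‖ ≤ (1/2 : ℝ) ^ n := by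
    intro n
    rw [hg]
    simp only
    rw [norm_smul ((1/2:ℂ)^n) (fseq n)]
    have h1 : ‖(1/2 : ℂ) ^ n‖ = (1/2 : ℝ) ^ n := by
      rw [norm_pow]
      norm_num
    rw [h1]
    calc (1/2:ℝ)^n * ‖fseq n‖ ≤ (1/2:ℝ)^n * 1 :=
          mul_le_mul_of_nonneg_left (hfnorm n) (by positivity)
      _ = (1/2:ℝ)^n := mul_one _
  have hsum : Summable g :=
    Summable.of_norm_bounded (summable_geometric_of_lt_one (by norm_num) (by norm_num)) hgnorm
  set G : C₀(X, ℂ) := ∑' n, g n with hG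
  have hval : ∀ n : ℕ, (n:ℝ) < ‖T G (yseq n)‖ := by
    intro n
    have hvanish : (evalLM (yseq n) ∘ₗ T) (G - g n) = 0 := by
      refine vanish (hduniq (Wseq n) n) (hOopen n) (hxO n) ?_
      intro w hw
      induction w using OnePoint.rec with
      | infty => simp
      | coe b =>
        show (G - g n) b = 0
        have hGb : G b = ∑' m, g m b := by
          rw [hG]
          exact ContinuousLinearMap.map_tsum (evalCLM b) hsum
        have hsingle : ∑' m, g m b = g n b := by
          refine tsum_eq_single n ?_
          intro m hm
          have : fseq m b = 0 := by
            by_contra hne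
            have hmem := supported_iff.mp (hfsup m) b hne
            have := hOdisj m n hm
            rw [eq_empty_iff_forall_notMem] at this
            exact this _ ⟨hmem, hw⟩
          rw [hg]
          show ((1/2:ℂ)^m) • fseq m b = 0
          rw [this, smul_zero]
        show G b - g n b = 0
        rw [hGb, hsingle, sub_self]
    have heq : T G (yseq n) = T (g n) (yseq n) := by
      have h1 : (evalLM (yseq n) ∘ₗ T) G - (evalLM (yseq n) ∘ₗ T) (g n) = 0 := by
        rw [← map_sub]; exact hvanish
      have h2 := sub_eq_zero.mp h1
      exact h2
    rw [heq]
    show (n:ℝ) < ‖T (((1/2:ℂ)^n) • fseq n) (yseq n)‖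
    rw [_root_.map_smul]
    show (n:ℝ) < ‖((1/2:ℂ)^n) • ((T (fseq n)) (yseq n))‖
    rw [norm_smul ((1/2:ℂ)^n) (T (fseq n) (yseq n))]
    have h1 : ‖(1/2 : ℂ) ^ n‖ = (1/2 : ℝ) ^ n := by
      rw [norm_pow]; norm_num
    rw [h1]
    have h2 := hfbig n
    have h3 : (0:ℝ) < (1/2:ℝ)^n := by positivity
    have h4 : (1/2:ℝ)^n * ((n:ℝ) * 2^n) = n := by
      rw [div_pow, one_pow]
      field_simp
    calc (n:ℝ) = (1/2:ℝ)^n * ((n:ℝ) * 2^n) := h4.symm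
      _ < (1/2:ℝ)^n * ‖T (fseq n) (yseq n)‖ := by
          apply mul_lt_mul_of_pos_left h2 h3
  obtain ⟨n, hn⟩ := exists_nat_gt ‖T G‖
  have := hval n
  have hle : ‖T G (yseq n)‖ ≤ ‖T G‖ := norm_apply_le' _ _
  linarith

section Theta
variable {Y : Type*} [TopologicalSpace Y] [LocallyCompactSpace Y] [T2Space Y]

/-- The functional `f ↦ θ f y`. -/
noncomputable def phi (θ : C₀(X, ℂ) ≃ₗ[ℂ] C₀(Y, ℂ)) (y : Y) : C₀(X, ℂ) →ₗ[ℂ] ℂ :=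
  evalLM y ∘ₗ (θ : C₀(X, ℂ) →ₗ[ℂ] C₀(Y, ℂ))

@[simp] lemma phi_apply (θ : C₀(X, ℂ) ≃ₗ[ℂ] C₀(Y, ℂ)) (y : Y) (f : C₀(X, ℂ)) :
    phi θ y f = θ f y := rfl

variable (θ : C₀(X, ℂ) ≃ₗ[ℂ] C₀(Y, ℂ))

lemma phi_sep (hfwd : ∀ f g : C₀(X, ℂ), f * g = 0 → θ f * θ g = 0) (y : Y) :
    Sep (phi θ y) := by
  intro f g h
  have := hfwd f g h
  have h2 : θ f y * θ g y = 0 := by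
    have := congrArg (fun u => u y) this
    simpa using this
  simpa using mul_eq_zero.mp h2

lemma phi_ne_zero (y : Y) : phi θ y ≠ 0 := by
  obtain ⟨g, W, hWo, hyW, hgsup, hg1, hgn, hgy⟩ := exists_urysohn (X := Y)
    (U := {(∞ : OnePoint Y)}ᶜ) isClosed_infty.isOpen_compl (by simp)
    (x := y) (by simp [OnePoint.coe_ne_infty])
  intro h
  have : phi θ y (θ.symm g) = 0 := by rw [h]; rfl
  rw [phi_apply, LinearEquiv.apply_symm_apply] at this
  rw [hgy] at this
  exact one_ne_zero this

/-- The support of `phi θ.symm x` at `↑y` forces the support of `phi θ y` to be `↑x`. -/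
lemma support_flip (hfwd : ∀ f g : C₀(X, ℂ), f * g = 0 → θ f * θ g = 0)
    (hinv : ∀ f g : C₀(Y, ℂ), f * g = 0 → θ.symm f * θ.symm g = 0)
    {x : X} {y : Y} (hxy : IsSupportPt (phi θ.symm x) (y : OnePoint Y)) :
    IsSupportPt (phi θ y) (x : OnePoint X) := by
  have hnot : ∀ w, w ≠ (x : OnePoint X) → ¬IsSupportPt (phi θ y) w := by
    intro w hw hsp
    obtain ⟨U, U', hU, hU', hxU, hwU', hdisj⟩ := t2_separation (Ne.symm hw)
    obtain ⟨f, hfsup, hfne⟩ := hsp U' hU' hwU'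
    rw [phi_apply] at hfne
    obtain ⟨k, Wk, hWko, hxWk, hksup, hk1, hkn, hkx⟩ := exists_urysohn
      (U := U ∩ {(∞ : OnePoint X)}ᶜ) (hU.inter isClosed_infty.isOpen_compl)
      (by simp) (x := x) ⟨hxU, by simp [OnePoint.coe_ne_infty]⟩
    have hkf : k * f = 0 := by
      refine mul_eq_zero_of_disjoint (hksup.mono inter_subset_left) hfsup ?_
      exact disjoint_iff_inter_eq_empty.mp hdisj
    have hθkf := hfwd k f hkf
    set V : Set Y := {v | θ f v ≠ 0} with hV
    have hVo : IsOpen V := isOpen_ne_fun (map_continuous (θ f)) continuous_const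
    have hyV : y ∈ V := hfne
    obtain ⟨g, hgsup, hgne⟩ := hxy ((↑) '' V) (isOpen_image_coe.mpr hVo)
      (mem_image_of_mem _ hyV)
    rw [phi_apply] at hgne
    have hθkg : θ k * g = 0 := by
      ext v
      simp only [ZeroAtInftyContinuousMap.mul_apply, ZeroAtInftyContinuousMap.zero_apply]
      by_cases hgv : g v = 0
      · rw [hgv, mul_zero]
      · have hvV : v ∈ V := by
          have := supported_iff.mp hgsup v hgv
          rcases this with ⟨v', hv', hvv'⟩
          exact OnePoint.coe_eq_coe.mp hvv' ▸ hv'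
        have : θ k v * θ f v = 0 := by
          have := congrArg (fun u => u v) hθkf
          simpa using this
        rcases mul_eq_zero.mp this with h | h
        · rw [h, zero_mul]
        · exact absurd h hvV
    have := hinv (θ k) g hθkg
    rw [LinearEquiv.symm_apply_apply] at this
    have h0 : k x * θ.symm g x = 0 := by
      have := congrArg (fun u => u x) this
      simpa using this
    rw [hkx, one_mul] at h0
    exact hgne h0
  obtain ⟨z, hz⟩ := exists_supportPt (phi_ne_zero θ y)
  by_cases hzx : z = (x : OnePoint X)
  · rwa [hzx] at hz
  · exact absurd hz (hnot z hzx)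

/-- the support point is in the closure of the cozero set of any function not killed. -/
lemma support_mem_closure_cozero (hfwd : ∀ f g : C₀(X, ℂ), f * g = 0 → θ f * θ g = 0)
    {y : Y} {z : OnePoint X} (hz : IsSupportPt (phi θ y) z) {f : C₀(X, ℂ)}
    (hne : θ f y ≠ 0) : z ∈ closure {w | ext f w ≠ 0} := by
  by_contra h
  have h0 : phi θ y f = 0 := by
    refine vanish (φ := phi θ y) (z := z) ?_
      (U := (closure {w | ext f w ≠ 0})ᶜ) isClosed_closure.isOpen_compl h ?_
    · intro w hw hsp
      exact hw (supportPt_unique (phi_sep θ hfwd y) hsp hz)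
    · intro w hw
      by_contra hne'
      exact hw (subset_closure hne')
  rw [phi_apply] at h0
  exact hne h0

/-- continuity of a support-point selection. -/
lemma support_continuous (hfwd : ∀ f g : C₀(X, ℂ), f * g = 0 → θ f * θ g = 0)
    (σ' : Y → OnePoint X) (hσ' : ∀ y, IsSupportPt (phi θ y) (σ' y)) :
    Continuous σ' := by
  rw [continuous_iff_continuousAt]
  intro y₀
  rw [ContinuousAt, tendsto_nhds]
  intro U hUo hU0
  obtain ⟨U'', hU''o, hzU'', hclU''⟩ := normal_exists_closure_subset
    (isClosed_singleton (x := σ' y₀)) hUo (singleton_subset_iff.mpr hU0)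
  obtain ⟨f, hfsup, hfne⟩ := hσ' y₀ U'' hU''o (hzU'' rfl)
  rw [phi_apply] at hfne
  have hWo : IsOpen {v : Y | θ f v ≠ 0} := isOpen_ne_fun (map_continuous (θ f)) continuous_const
  refine Filter.mem_of_superset (hWo.mem_nhds hfne) ?_
  intro v hv
  show σ' v ∈ U
  refine hclU'' ?_
  by_contra hmem
  obtain ⟨f₂, hf₂sup, hf₂ne⟩ := hσ' v (closure U'')ᶜ isClosed_closure.isOpen_compl hmem
  rw [phi_apply] at hf₂ne
  have h2 : f₂ * f = 0 := by
    refine mul_eq_zero_of_disjoint hf₂sup (hfsup.mono subset_closure) ?_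
    rw [eq_empty_iff_forall_notMem]
    rintro w ⟨hw1, hw2⟩
    exact hw1 hw2
  have := hfwd f₂ f h2
  have h3 : θ f₂ v * θ f v = 0 := by
    have := congrArg (fun u => u v) this
    simpa using this
  rcases mul_eq_zero.mp h3 with h | h
  · exact hf₂ne h
  · exact hv h

/-- Density: every neighborhood of every point of `Y` contains a point whose support is finite. -/
lemma dense_finite_support (hfwd : ∀ f g : C₀(X, ℂ), f * g = 0 → θ f * θ g = 0)
    (hinv : ∀ f g : C₀(Y, ℂ), f * g = 0 → θ.symm f * θ.symm g = 0)
    (y : Y) {V : Set Y} (hV : V ∈ 𝓝 y) :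
    ∃ y' ∈ V, ∃ x : X, IsSupportPt (phi θ y') (x : OnePoint X) := by
  obtain ⟨K, hK𝓝, hKV, hKcomp⟩ := local_compact_nhds hV
  have hyW : y ∈ interior K := mem_interior_iff_mem_nhds.mpr hK𝓝
  obtain ⟨g, W, hWo, hyWg, hgsup, hg1, hgn, hgy⟩ := exists_urysohn (X := Y)
    (U := (↑) '' interior K) (isOpen_image_coe.mpr isOpen_interior)
    (infty_notMem_image_coe) (x := y) (mem_image_of_mem _ hyW)
  have hgne : g ≠ 0 := by
    intro h
    rw [h] at hgy
    simp at hgy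
  have hfne : θ.symm g ≠ 0 := by
    intro h
    have := congrArg θ h
    rw [LinearEquiv.apply_symm_apply] at this
    simp only [map_zero] at this
    exact hgne this
  obtain ⟨x, hx⟩ : ∃ x : X, θ.symm g x ≠ 0 := by
    by_contra h
    push_neg at h
    exact hfne (ZeroAtInftyContinuousMap.ext h)
  have hφne : phi θ.symm x ≠ 0 := by
    intro h
    have : phi θ.symm x g = 0 := by rw [h]; rfl
    rw [phi_apply] at this
    exact hx this
  obtain ⟨z, hz⟩ := exists_supportPt hφne
  have hzcl : z ∈ closure {w | ext g w ≠ 0} :=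
    support_mem_closure_cozero θ.symm hinv hz hx
  have hsub : closure {w : OnePoint Y | ext g w ≠ 0} ⊆ (↑) '' K := by
    have h1 : {w : OnePoint Y | ext g w ≠ 0} ⊆ (↑) '' K := by
      intro w hw
      have := hgsup w hw
      exact image_mono interior_subset this
    refine closure_minimal h1 ?_
    rw [isClosed_image_coe]
    exact ⟨hKcomp.isClosed, hKcomp⟩
  obtain ⟨y', hy'K, hy'z⟩ := hsub hzcl
  subst hy'z
  exact ⟨y', hKV hy'K, x, support_flip θ hfwd hinv hz⟩

/-- representation at points with bounded functional and finite support. -/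
lemma rep_of_bounded (hfwd : ∀ f g : C₀(X, ℂ), f * g = 0 → θ f * θ g = 0)
    {y : Y} {x : X} (hx : IsSupportPt (phi θ y) (x : OnePoint X))
    {C : ℝ} (hC : 0 ≤ C) (hb : ∀ f, ‖θ f y‖ ≤ C * ‖f‖) (f u : C₀(X, ℂ)) (hu : u x = 1) :
    θ f y = θ u y * f x := by
  have huniq : ∀ w, w ≠ (x : OnePoint X) → ¬IsSupportPt (phi θ y) w := fun w hw hsp =>
    hw (supportPt_unique (phi_sep θ hfwd y) hsp hx)
  have hv : phi θ y (f - f x • u) = 0 := by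
    refine bounded_vanish huniq hC (fun f' => by simpa using hb f') ?_
    show (f - f x • u) x = 0
    rw [ZeroAtInftyContinuousMap.sub_apply, ZeroAtInftyContinuousMap.smul_apply, hu]
    simp
  rw [phi_apply, map_sub, _root_.map_smul] at hv
  have hv2 : θ f y - f x • (θ u) y = 0 := by
    simpa [ZeroAtInftyContinuousMap.sub_apply, ZeroAtInftyContinuousMap.smul_apply] using hv
  have := sub_eq_zero.mp hv2
  rw [this, smul_eq_mul, mul_comm]

/-- reverse flip. -/
lemma support_flip' (hfwd : ∀ f g : C₀(X, ℂ), f * g = 0 → θ f * θ g = 0)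
    (hinv : ∀ f g : C₀(Y, ℂ), f * g = 0 → θ.symm f * θ.symm g = 0)
    {x : X} {y : Y} (hxy : IsSupportPt (phi θ y) (x : OnePoint X)) :
    IsSupportPt (phi θ.symm x) (y : OnePoint Y) := by
  have h1 : IsSupportPt (phi θ.symm.symm y) (x : OnePoint X) := by
    rw [LinearEquiv.symm_symm]; exact hxy
  exact support_flip θ.symm hinv (by simp only [LinearEquiv.symm_symm]; exact hfwd) h1

/-- an infinite set in the compactification has an accumulation point. -/
lemma exists_acc {A : Set (OnePoint X)} (hA : A.Infinite) :
    ∃ z : OnePoint X, ∀ W, IsOpen W → z ∈ W → ∃ a, a ∈ A ∧ a ∈ W ∧ a ≠ z := by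
  by_contra h
  push_neg at h
  have h' : ∀ z : OnePoint X, ∃ W, IsOpen W ∧ z ∈ W ∧ ∀ a, a ∈ A → a ∈ W → a = z := by
    intro z
    obtain ⟨W, hWo, hzW, hW⟩ := h z
    exact ⟨W, hWo, hzW, fun a ha haW => by
      by_contra hne
      exact hne (hW a ha haW)⟩
  choose V hVo hVz hV using h'
  obtain ⟨t, ht⟩ := isCompact_univ.elim_finite_subcover V hVo
    (fun z _ => mem_iUnion.mpr ⟨z, hVz z⟩)
  refine hA ?_
  refine Set.Finite.subset t.finite_toSet ?_
  intro a ha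
  obtain ⟨z, hz⟩ := mem_iUnion.mp (ht (mem_univ a))
  rw [mem_iUnion] at hz
  obtain ⟨hzt, hza⟩ := hz
  rw [hV z a ha hza]
  exact Finset.mem_coe.mpr hzt

/-- Finiteness of the set of points with finite support and unbounded functional. -/
lemma DR_finite (hfwd : ∀ f g : C₀(X, ℂ), f * g = 0 → θ f * θ g = 0)
    (hinv : ∀ f g : C₀(Y, ℂ), f * g = 0 → θ.symm f * θ.symm g = 0) :
    {y : Y | (∃ x : X, IsSupportPt (phi θ y) (x : OnePoint X)) ∧
      ¬∃ C : ℝ, ∀ f, ‖θ f y‖ ≤ C * ‖f‖}.Finite := by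
  set DR := {y : Y | (∃ x : X, IsSupportPt (phi θ y) (x : OnePoint X)) ∧
      ¬∃ C : ℝ, ∀ f, ‖θ f y‖ ≤ C * ‖f‖} with hDR
  by_contra hfin
  have hinf : DR.Infinite := hfin
  haveI : Infinite DR := Set.infinite_coe_iff.mpr hinf
  have hch : ∀ y : DR, ∃ x : X, IsSupportPt (phi θ (y : Y)) (x : OnePoint X) := fun y => y.2.1
  choose xf hxf using hch
  have hinj : Function.Injective fun y : DR => ((xf y : X) : OnePoint X) := by
    intro y1 y2 h12
    simp only [OnePoint.coe_eq_coe] at h12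
    have h1 := support_flip' θ hfwd hinv (hxf y1)
    have h2 := support_flip' θ hfwd hinv (hxf y2)
    rw [h12] at h1
    have := supportPt_unique (phi_sep θ.symm hinv (xf y2)) h1 h2
    exact Subtype.ext (OnePoint.coe_eq_coe.mp this)
  have hAinf : (range fun y : DR => ((xf y : X) : OnePoint X)).Infinite :=
    Set.infinite_range_of_injective hinj
  obtain ⟨z, hz⟩ := exists_acc hAinf
  refine hump (θ : C₀(X, ℂ) →ₗ[ℂ] C₀(Y, ℂ)) z ?_
  intro W hWo hzW M
  obtain ⟨a, haA, haW, haz⟩ := hz W hWo hzW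
  obtain ⟨y₀, hy₀⟩ := mem_range.mp haA
  refine ⟨a, (y₀ : Y), haW, haz, ?_, ?_⟩
  · intro w hw hsp
    refine hw ?_
    have : w = ((xf y₀ : X) : OnePoint X) :=
      supportPt_unique (phi_sep θ hfwd (y₀ : Y)) hsp (hxf y₀)
    rw [this, hy₀]
  · intro O hOo haO
    have huniq : ∀ w, w ≠ a → ¬IsSupportPt (phi θ (y₀ : Y)) w := by
      intro w hw hsp
      refine hw ?_
      have : w = ((xf y₀ : X) : OnePoint X) :=
        supportPt_unique (phi_sep θ hfwd (y₀ : Y)) hsp (hxf y₀)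
      rw [this, hy₀]
    exact unbounded_loc huniq y₀.2.2 hOo haO M
/-- helper: an open set contained in a finite set makes its points isolated. -/
lemma isOpen_singleton_of_finite {Z : Type*} [TopologicalSpace Z] [T1Space Z]
    {V : Set Z} (hVo : IsOpen V) (hVfin : V.Finite) {v : Z} (hv : v ∈ V) :
    IsOpen {v} := by
  have h1 : IsClosed (V \ {v}) := (hVfin.subset diff_subset).isClosed
  have h2 : IsOpen (V \ (V \ {v})) := hVo.sdiff h1
  convert h2 using 1
  ext w
  simp only [mem_singleton_iff, mem_diff, not_and, not_not]
  constructor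
  · rintro rfl; exact ⟨hv, fun _ => rfl⟩
  · rintro ⟨hw1, hw2⟩; exact hw2 hw1

/-- Every functional has its support at a point of `X` (not at infinity). -/
lemma support_finite_everywhere (hfwd : ∀ f g : C₀(X, ℂ), f * g = 0 → θ f * θ g = 0)
    (hinv : ∀ f g : C₀(Y, ℂ), f * g = 0 → θ.symm f * θ.symm g = 0) (y₀ : Y) :
    ∃ x : X, IsSupportPt (phi θ y₀) (x : OnePoint X) := by
  by_contra hy₀
  push_neg at hy₀
  have hallsp : ∀ y, ∃ z, IsSupportPt (phi θ y) z := fun y =>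
    exists_supportPt (phi_ne_zero θ y)
  choose σ' hσ' using hallsp
  have huniq : ∀ y w, IsSupportPt (phi θ y) w → w = σ' y := fun y w hw =>
    supportPt_unique (phi_sep θ hfwd y) hw (hσ' y)
  have hσy₀ : σ' y₀ = ∞ := by
    by_contra h
    obtain ⟨x, hx⟩ := (OnePoint.ne_infty_iff_exists).mp h
    exact hy₀ x (hx ▸ hσ' y₀)
  have hcont := support_continuous θ hfwd σ' hσ'
  set DR := {y : Y | (∃ x : X, IsSupportPt (phi θ y) (x : OnePoint X)) ∧
      ¬∃ C : ℝ, ∀ f, ‖θ f y‖ ≤ C * ‖f‖} with hDRdef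
  have hDRfin : DR.Finite := DR_finite θ hfwd hinv
  obtain ⟨g₁, W₁, hW₁o, hyW₁, hg₁sup, hg₁1, hg₁n, hg₁y⟩ := exists_urysohn (X := Y)
    (U := {(∞ : OnePoint Y)}ᶜ) isClosed_infty.isOpen_compl (by simp)
    (x := y₀) (by simp [OnePoint.coe_ne_infty])
  set f₁ := θ.symm g₁ with hf₁def
  refine hump (θ : C₀(X, ℂ) →ₗ[ℂ] C₀(Y, ℂ)) ∞ ?_
  intro W hWo hWinf M
  set M' := max M 1 with hM'def
  have hM' : (0:ℝ) < M' := lt_of_lt_of_le one_pos (le_max_right _ _)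
  set W' := {w : OnePoint X | ‖ext f₁ w‖ < (M')⁻¹} with hW'def
  have hW'o : IsOpen W' := isOpen_lt (by continuity) continuous_const
  have hWinf' : ∞ ∈ W' := by
    show ‖ext f₁ ∞‖ < (M')⁻¹
    rw [ext_infty]
    simpa using inv_pos.mpr hM'
  have hpre : σ' ⁻¹' (W ∩ W') ∈ 𝓝 y₀ := by
    refine hcont.continuousAt.preimage_mem_nhds ?_
    rw [hσy₀]
    exact (hWo.inter hW'o).mem_nhds ⟨hWinf, hWinf'⟩
  set NY := (fun y : Y => (y : OnePoint Y)) ⁻¹' W₁ with hNYdef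
  have hNYo : IsOpen NY := hW₁o.preimage OnePoint.continuous_coe
  obtain ⟨V₀, hV₀sub, hV₀o, hyV₀⟩ := mem_nhds_iff.mp hpre
  set V := V₀ ∩ NY with hVdef
  have hVo : IsOpen V := hV₀o.inter hNYo
  have hyV : y₀ ∈ V := ⟨hyV₀, hyW₁⟩
  have hfin : (DR ∪ {y₀}).Finite := hDRfin.union (finite_singleton _)
  -- find y' ∈ V, y' ∉ DR ∪ {y₀}, with finite support
  obtain ⟨y', hy'V, hy'DR, x, hx⟩ :
      ∃ y', y' ∈ V ∧ y' ∉ DR ∪ {y₀} ∧ ∃ x : X, IsSupportPt (phi θ y') (x : OnePoint X) := by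
    by_cases hne : (V \ (DR ∪ {y₀})).Nonempty
    · obtain ⟨v, hv⟩ := hne
      obtain ⟨y', hy'mem, x, hx⟩ := dense_finite_support θ hfwd hinv v
        ((hVo.sdiff hfin.isClosed).mem_nhds hv)
      exact ⟨y', hy'mem.1, hy'mem.2, x, hx⟩
    · exfalso
      rw [not_nonempty_iff_eq_empty, diff_eq_empty] at hne
      have hy₀open : IsOpen {y₀} :=
        isOpen_singleton_of_finite hVo (hfin.subset hne) hyV
      obtain ⟨y', hy'mem, x, hx⟩ := dense_finite_support θ hfwd hinv y₀
        (hy₀open.mem_nhds rfl)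
      rw [mem_singleton_iff] at hy'mem
      exact hy₀ x (hy'mem ▸ hx)
  have hσy' : σ' y' = (x : OnePoint X) := (huniq y' _ hx).symm
  have hy'bdd : ∃ C : ℝ, ∀ f, ‖θ f y'‖ ≤ C * ‖f‖ := by
    by_contra hb
    exact hy'DR (mem_union_left _ ⟨⟨x, hx⟩, hb⟩)
  obtain ⟨C, hC⟩ := hy'bdd
  have hC' : ∀ f, ‖θ f y'‖ ≤ (max C 0) * ‖f‖ := fun f =>
    (hC f).trans (mul_le_mul_of_nonneg_right (le_max_left _ _) (norm_nonneg _))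
  have hg₁y' : g₁ y' = 1 := hg₁1 y' hy'V.2
  have hθf₁y' : θ f₁ y' = 1 := by
    rw [hf₁def, LinearEquiv.apply_symm_apply, hg₁y']
  have hxWW' : (x : OnePoint X) ∈ W ∩ W' := by
    rw [← hσy']
    exact hV₀sub hy'V.1
  refine ⟨(x : OnePoint X), y', hxWW'.1, OnePoint.coe_ne_infty x, ?_, ?_⟩
  · intro w hw hsp
    exact hw ((huniq y' w hsp).trans hσy')
  · intro O hOo hxO
    obtain ⟨u, Wu, hWuo, hxWu, husup, hu1, hun, hux⟩ := exists_urysohn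
      (U := O ∩ {(∞ : OnePoint X)}ᶜ) (hOo.inter isClosed_infty.isOpen_compl)
      (by simp) (x := x) ⟨hxO, by simp [OnePoint.coe_ne_infty]⟩
    refine ⟨u, husup.mono inter_subset_left, hun, ?_⟩
    have hrep := rep_of_bounded θ hfwd hx (le_max_right C 0) hC' f₁ u hux
    rw [hθf₁y'] at hrep
    -- hrep : 1 = θ u y' * f₁ x
    have hf₁x : ‖ext f₁ (x : OnePoint X)‖ < (M')⁻¹ := hxWW'.2
    rw [ext_coe] at hf₁x
    have hprod : ‖θ u y'‖ * ‖f₁ x‖ = 1 := by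
      rw [← norm_mul, ← hrep, norm_one]
    have hf₁pos : 0 < ‖f₁ x‖ := by
      rcases eq_or_lt_of_le (norm_nonneg (f₁ x)) with h | h
      · exfalso
        rw [← h, mul_zero] at hprod
        exact one_ne_zero hprod.symm
      · exact h
    have hMM' : M ≤ M' := le_max_left _ _
    have : M' < ‖θ u y'‖ := by
      have h1 : M' * ‖f₁ x‖ < 1 := by
        have := (mul_lt_mul_of_pos_left hf₁x hM')
        rwa [mul_inv_cancel₀ hM'.ne'] at this
      nlinarith
    show M < ‖θ u y'‖
    linarith
end Theta
end S10

open S10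

theorem stmt_10
    {Ω Δ : Type*} [TopologicalSpace Ω] [LocallyCompactSpace Ω] [T2Space Ω]
    [TopologicalSpace Δ] [LocallyCompactSpace Δ] [T2Space Δ]
    (θ : C₀(Ω, ℂ) ≃ₗ[ℂ] C₀(Δ, ℂ))
    (hfwd : ∀ f g : C₀(Ω, ℂ), f * g = 0 → θ f * θ g = 0)
    (hinv : ∀ f g : C₀(Δ, ℂ), f * g = 0 → θ.symm f * θ.symm g = 0) :
    ∃ (σ : Δ ≃ₜ Ω) (h : Δ → ℂ), Continuous h ∧ (∀ ν : Δ, h ν ≠ 0) ∧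
      ∀ (f : C₀(Ω, ℂ)) (ν : Δ), θ f ν = h ν * f (σ ν) := by
  classical
  have hinv' : ∀ f g : C₀(Ω, ℂ), f * g = 0 → θ.symm.symm f * θ.symm.symm g = 0 := by
    simp only [LinearEquiv.symm_symm]; exact hfwd
  -- support maps
  choose σ1 hσ1 using support_finite_everywhere θ hfwd hinv
  choose τ1 hτ1 using support_finite_everywhere θ.symm hinv hinv'
  have uσ : ∀ (y : Δ) (w : OnePoint Ω), IsSupportPt (phi θ y) w → w = ((σ1 y : Ω) : OnePoint Ω) :=
    fun y w hw => supportPt_unique (phi_sep θ hfwd y) hw (hσ1 y)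
  have uτ : ∀ (x : Ω) (w : OnePoint Δ), IsSupportPt (phi θ.symm x) w →
      w = ((τ1 x : Δ) : OnePoint Δ) :=
    fun x w hw => supportPt_unique (phi_sep θ.symm hinv x) hw (hτ1 x)
  have hleft : ∀ y : Δ, τ1 (σ1 y) = y := by
    intro y
    have h1 := support_flip' θ hfwd hinv (hσ1 y)
    have := uτ (σ1 y) _ h1
    exact (OnePoint.coe_eq_coe.mp this).symm
  have hright : ∀ x : Ω, σ1 (τ1 x) = x := by
    intro x
    have h1 := support_flip θ hfwd hinv (hτ1 x)
    have := uσ (τ1 x) _ h1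
    exact (OnePoint.coe_eq_coe.mp this).symm
  -- continuity of the support maps
  have hcσ' : Continuous fun y : Δ => ((σ1 y : Ω) : OnePoint Ω) :=
    support_continuous θ hfwd _ hσ1
  have hcτ' : Continuous fun x : Ω => ((τ1 x : Δ) : OnePoint Δ) :=
    support_continuous θ.symm hinv _ hτ1
  have hcσ : Continuous σ1 := by
    rw [OnePoint.isOpenEmbedding_coe.isInducing.continuous_iff]
    exact hcσ'
  have hcτ : Continuous τ1 := by
    rw [OnePoint.isOpenEmbedding_coe.isInducing.continuous_iff]
    exact hcτ'
  -- finiteness of the unboundedness set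
  set D : Set Δ := {y : Δ | ¬∃ C : ℝ, ∀ f, ‖θ f y‖ ≤ C * ‖f‖} with hDdef
  have hDfin : D.Finite := by
    refine (DR_finite θ hfwd hinv).subset ?_
    intro y hy
    exact ⟨⟨σ1 y, hσ1 y⟩, hy⟩
  -- the key pointwise statement
  have KPS : ∀ (ν : Δ) (f : C₀(Ω, ℂ)), f (σ1 ν) = 0 → θ f ν = 0 := by
    intro ν f hf0
    have huniq : ∀ w, w ≠ ((σ1 ν : Ω) : OnePoint Ω) → ¬IsSupportPt (phi θ ν) w :=
      fun w hw hsp => hw (uσ ν w hsp)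
    by_cases hbdd : ∃ C : ℝ, ∀ f, ‖θ f ν‖ ≤ C * ‖f‖
    · obtain ⟨C, hC⟩ := hbdd
      have hC' : ∀ f, ‖θ f ν‖ ≤ (max C 0) * ‖f‖ := fun f =>
        (hC f).trans (mul_le_mul_of_nonneg_right (le_max_left _ _) (norm_nonneg _))
      have := bounded_vanish huniq (le_max_right C 0) (fun f' => by simpa using hC' f')
        (f := f) (by simpa using hf0)
      simpa using this
    by_cases hiso : IsOpen ({σ1 ν} : Set Ω)
    · have := vanish huniq (U := (fun x : Ω => (x : OnePoint Ω)) '' {σ1 ν})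
        (isOpen_image_coe.mpr hiso) (mem_image_of_mem _ rfl) (f := f) ?_
      · simpa using this
      · rintro w ⟨x', hx', rfl⟩
        rw [mem_singleton_iff] at hx'
        subst hx'
        simpa using hf0
    -- non-isolated, unbounded case
    have hνiso : ¬IsOpen ({ν} : Set Δ) := by
      intro hop
      refine hiso ?_
      have : ({σ1 ν} : Set Ω) = τ1 ⁻¹' {ν} := by
        ext x
        simp only [mem_singleton_iff, mem_preimage]
        constructor
        · rintro rfl; exact hleft ν
        · intro h; rw [← h, hright]
      rw [this]
      exact hop.preimage hcτ
    obtain ⟨f₁, Wz, hWzo, hxWz, hf₁sup, hf₁1, hf₁n, hf₁x⟩ := exists_urysohn (X := Ω)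
      (U := {(∞ : OnePoint Ω)}ᶜ) isClosed_infty.isOpen_compl (by simp)
      (x := σ1 ν) (by simp [OnePoint.coe_ne_infty])
    have key : ∀ ε : ℝ, 0 < ε → ‖θ f ν‖ ≤ ε := by
      intro ε hε
      set δ : ℝ := ε / (2 * (‖θ f₁‖ + 1)) with hδdef
      have hδpos : 0 < δ := by positivity
      set Vν : Set Δ := {y | ‖θ f ν - θ f y‖ < ε/2} with hVνdef
      have hVνo : IsOpen Vν := by
        have hc : Continuous fun y : Δ => ‖θ f ν - θ f y‖ :=
          (continuous_const.sub (map_continuous (θ f))).norm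
        exact isOpen_lt hc continuous_const
      have hνVν : ν ∈ Vν := by
        show ‖θ f ν - θ f ν‖ < ε/2
        simpa using by positivity
      set Zσ : Set Δ := (fun y : Δ => ((σ1 y : Ω) : OnePoint Ω)) ⁻¹'
        (Wz ∩ {w | ‖ext f w‖ < δ}) with hZσdef
      have hZσo : IsOpen Zσ := by
        refine IsOpen.preimage hcσ' ?_
        exact hWzo.inter (isOpen_lt (by continuity) continuous_const)
      have hνZσ : ν ∈ Zσ := by
        refine ⟨hxWz, ?_⟩
        show ‖ext f ((σ1 ν : Ω) : OnePoint Ω)‖ < δ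
        rw [ext_coe, hf0]
        simpa using hδpos
      set G : Set Δ := Vν ∩ Zσ with hGdef
      have hGo : IsOpen G := hVνo.inter hZσo
      have hνG : ν ∈ G := ⟨hνVν, hνZσ⟩
      have hfin : (D ∪ {ν}).Finite := hDfin.union (finite_singleton _)
      obtain ⟨y, hyG, hyD⟩ : ∃ y, y ∈ G ∧ y ∉ D ∪ {ν} := by
        by_contra hne
        push_neg at hne
        have hsub : G ⊆ D ∪ {ν} := hne
        exact hνiso (isOpen_singleton_of_finite hGo (hfin.subset hsub) hνG)
      have hybdd : ∃ C : ℝ, ∀ f, ‖θ f y‖ ≤ C * ‖f‖ := by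
        by_contra hb
        exact hyD (mem_union_left _ hb)
      obtain ⟨C, hC⟩ := hybdd
      have hC' : ∀ f, ‖θ f y‖ ≤ (max C 0) * ‖f‖ := fun f =>
        (hC f).trans (mul_le_mul_of_nonneg_right (le_max_left _ _) (norm_nonneg _))
      have hf₁σy : f₁ (σ1 y) = 1 := hf₁1 _ hyG.2.1
      have hrep := rep_of_bounded θ hfwd (hσ1 y) (le_max_right C 0) hC' f f₁ hf₁σy
      have hsmall : ‖f (σ1 y)‖ < δ := by
        have := hyG.2.2
        rwa [mem_setOf_eq, ext_coe] at this
      have hbound : ‖θ f y‖ ≤ ‖θ f₁‖ * δ := by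
        rw [hrep, norm_mul]
        have h1 : ‖θ f₁ y‖ ≤ ‖θ f₁‖ := norm_apply_le' _ _
        have h2 : (0:ℝ) ≤ ‖θ f₁ y‖ := norm_nonneg _
        nlinarith [norm_nonneg (f (σ1 y)), norm_nonneg (θ f₁)]
      have hδ2 : ‖θ f₁‖ * δ ≤ ε / 2 := by
        have hpos : (0:ℝ) < 2*(‖θ f₁‖+1) := by positivity
        rw [hδdef, ← mul_div_assoc]
        rw [div_le_div_iff₀ hpos (by norm_num : (0:ℝ) < 2)]
        nlinarith [norm_nonneg (θ f₁)]
      calc ‖θ f ν‖ ≤ ‖θ f ν - θ f y‖ + ‖θ f y‖ := by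
            simpa using norm_add_le (θ f ν - θ f y) (θ f y)
        _ ≤ ε/2 + ε/2 := by
            have h1 := hyG.1
            rw [hVνdef, mem_setOf_eq] at h1
            linarith
        _ = ε := by ring
    have h0 : ‖θ f ν‖ ≤ 0 := le_of_forall_pos_le_add fun ε hε => by simpa using key ε hε
    simpa using le_antisymm h0 (norm_nonneg _)
  -- the weight function
  have hu : ∀ ν : Δ, ∃ u : C₀(Ω, ℂ), u (σ1 ν) = 1 := by
    intro ν
    obtain ⟨u, _, _, _, _, _, _, hux⟩ := exists_urysohn (X := Ω)
      (U := {(∞ : OnePoint Ω)}ᶜ) isClosed_infty.isOpen_compl (by simp)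
      (x := σ1 ν) (by simp [OnePoint.coe_ne_infty])
    exact ⟨u, hux⟩
  choose u huν using hu
  set hfun : Δ → ℂ := fun ν => θ (u ν) ν with hfundef
  have hrep : ∀ (f : C₀(Ω, ℂ)) (ν : Δ), θ f ν = hfun ν * f (σ1 ν) := by
    intro f ν
    have h1 : (f - f (σ1 ν) • u ν) (σ1 ν) = 0 := by
      rw [ZeroAtInftyContinuousMap.sub_apply, ZeroAtInftyContinuousMap.smul_apply, huν]
      simp
    have h2 := KPS ν _ h1
    rw [map_sub, _root_.map_smul] at h2
    have h3 : θ f ν - f (σ1 ν) • (θ (u ν)) ν = 0 := by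
      simpa [ZeroAtInftyContinuousMap.sub_apply, ZeroAtInftyContinuousMap.smul_apply] using h2
    have := sub_eq_zero.mp h3
    rw [this, smul_eq_mul, mul_comm]
  have hne : ∀ ν : Δ, hfun ν ≠ 0 := by
    intro ν hzero
    obtain ⟨g, W, hWo, hyW, hgsup, hg1, hgn, hgy⟩ := exists_urysohn (X := Δ)
      (U := {(∞ : OnePoint Δ)}ᶜ) isClosed_infty.isOpen_compl (by simp)
      (x := ν) (by simp [OnePoint.coe_ne_infty])
    have h1 : θ (θ.symm g) ν = 1 := by rw [LinearEquiv.apply_symm_apply, hgy]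
    rw [hrep (θ.symm g) ν, hzero, zero_mul] at h1
    exact one_ne_zero h1.symm
  have hcont : Continuous hfun := by
    rw [continuous_iff_continuousAt]
    intro ν₀
    obtain ⟨f₁, Wz, hWzo, hxWz, hf₁sup, hf₁1, hf₁n, hf₁x⟩ := exists_urysohn (X := Ω)
      (U := {(∞ : OnePoint Ω)}ᶜ) isClosed_infty.isOpen_compl (by simp)
      (x := σ1 ν₀) (by simp [OnePoint.coe_ne_infty])
    set Z : Set Δ := (fun y : Δ => ((σ1 y : Ω) : OnePoint Ω)) ⁻¹' Wz with hZdef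
    have hZo : IsOpen Z := hWzo.preimage hcσ'
    have hνZ : ν₀ ∈ Z := hxWz
    refine ContinuousAt.congr ((map_continuous (θ f₁)).continuousAt) ?_
    refine Filter.eventuallyEq_of_mem (hZo.mem_nhds hνZ) ?_
    intro y hy
    have h1 : f₁ (σ1 y) = 1 := hf₁1 _ hy
    have := hrep f₁ y
    rw [h1, mul_one] at this
    exact this
  refine ⟨⟨⟨σ1, τ1, hleft, hright⟩, hcσ, hcτ⟩, hfun, hcont, hne, fun f ν => hrep f ν⟩
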